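/- Let X = {P₁,...,Pₛ} ⊆ kⁿ and let O be a quasi order ideal whose residue classes form a basis of k[x]/I(X). Let Y ⊆ X with |Y| = i and let O_i ⊆ O be a quasi order ideal with |O_i| = i whose residue classes form a basis of k[x]/I(Y). Then for every monomial m ∈ ∂O_i ∩ O there exists a point P ∈ X \ Y such that the residue classes of O_i ∪ {m} form a basis of k[x]/I(Y ∪ {P}). -/

import Mathlib

open MvPolynomial

variable {k : Type*} [Field k] {n : ℕ} [DecidableEq (Fin n → k)]

noncomputable def borderF (S : Finset (Fin n →₀ ℕ)) : Finset (Fin n →₀ ℕ) :=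
  (S.biUnion fun s => (Finset.univ : Finset (Fin n)).image fun i => s + Finsupp.single i 1) \ S

def isQuasiOrderIdeal (O : Finset (Fin n →₀ ℕ)) : Prop :=
  ∀ t ∈ O, t ≠ 0 → t ∈ borderF (O.erase t)

def supportsBasis (I : Ideal (MvPolynomial (Fin n) k)) (O : Finset (Fin n →₀ ℕ)) : Prop :=
  LinearIndependent k (fun t : O => Ideal.Quotient.mk I (monomial t.1 (1 : k))) ∧
  Submodule.span k (Set.range fun t : O => Ideal.Quotient.mk I (monomial t.1 (1 : k))) = ⊤

section Auxiliary

set_option linter.unusedSectionVars false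

/-- Evaluation at the points of `Z` as an algebra homomorphism. -/
noncomputable def evalA (Z : Finset (Fin n → k)) :
    MvPolynomial (Fin n) k →ₐ[k] (↥Z → k) :=
  Pi.algHom k _ fun z => MvPolynomial.aeval (z : Fin n → k)

lemma aeval_eq_eval' (z : Fin n → k) (p : MvPolynomial (Fin n) k) :
    MvPolynomial.aeval z p = eval z p := by
  rw [aeval_def, Algebra.algebraMap_self]; rfl

lemma ker_evalA (Z : Finset (Fin n → k)) :
    RingHom.ker (evalA Z) = vanishingIdeal k (Z : Set (Fin n → k)) := by
  ext p
  simp only [RingHom.mem_ker, mem_vanishingIdeal_iff]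
  constructor
  · intro h x hx
    have := congrFun h ⟨x, hx⟩
    simpa [evalA, aeval_eq_eval'] using this
  · intro h
    funext z
    simpa [evalA, aeval_eq_eval'] using h z.1 z.2

lemma evalA_surj (Z : Finset (Fin n → k)) : Function.Surjective (evalA Z) := by
  classical
  have sep : ∀ z w : Fin n → k, z ≠ w →
      ∃ p : MvPolynomial (Fin n) k, eval z p = 1 ∧ eval w p = 0 := by
    intro z w hzw
    obtain ⟨j, hj⟩ := Function.ne_iff.mp hzw
    refine ⟨C (z j - w j)⁻¹ * (X j - C (w j)), ?_, ?_⟩ <;>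
      simp [sub_ne_zero.mpr hj, inv_mul_cancel₀]
  have ind : ∀ z ∈ Z, ∃ p : MvPolynomial (Fin n) k,
      eval z p = 1 ∧ ∀ w ∈ Z, w ≠ z → eval w p = 0 := by
    intro z _
    choose sp h1 h0 using sep
    refine ⟨∏ w ∈ Z.erase z, if h : z = w then 1 else sp z w h, ?_, ?_⟩
    · rw [map_prod]
      refine Finset.prod_eq_one fun w hw => ?_
      rw [dif_neg (by exact fun h => (Finset.mem_erase.mp hw).1 h.symm)]
      exact h1 _ _ _
    · intro w hw hwz
      rw [map_prod]
      refine Finset.prod_eq_zero (Finset.mem_erase.mpr ⟨hwz, hw⟩) ?_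
      rw [dif_neg (fun h => hwz h.symm)]
      exact h0 _ _ _
  intro f
  choose pind h1 h0 using ind
  refine ⟨∑ z ∈ Z.attach, C (f z) * pind z.1 z.2, ?_⟩
  funext w
  simp only [evalA, Pi.algHom_apply, aeval_eq_eval', map_sum, map_mul, eval_C]
  rw [Finset.sum_eq_single w]
  · rw [h1 w.1 w.2, mul_one]
  · intro z _ hz
    rw [h0 z.1 z.2 w.1 w.2 (fun h => hz (Subtype.ext h.symm)), mul_zero]
  · intro h; exact absurd (Finset.mem_attach _ _) h

noncomputable def quotEquiv (Z : Finset (Fin n → k)) :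
    (MvPolynomial (Fin n) k ⧸ vanishingIdeal k (Z : Set (Fin n → k))) ≃ₐ[k] (↥Z → k) :=
  (Ideal.quotientEquivAlgOfEq k (ker_evalA Z).symm).trans
    (Ideal.quotientKerAlgEquivOfSurjective (evalA_surj Z))

lemma finrank_quot (Z : Finset (Fin n → k)) :
    Module.finrank k (MvPolynomial (Fin n) k ⧸ vanishingIdeal k (Z : Set (Fin n → k))) = Z.card := by
  rw [(quotEquiv Z).toLinearEquiv.finrank_eq, Module.finrank_pi, Fintype.card_coe]

lemma mk_smul' (I : Ideal (MvPolynomial (Fin n) k)) (b : k) (p : MvPolynomial (Fin n) k) :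
    b • Ideal.Quotient.mk I p = Ideal.Quotient.mk I (b • p) := by
  rw [← Ideal.Quotient.mkₐ_eq_mk k I, map_smul]

lemma mk_fsum_smul (I : Ideal (MvPolynomial (Fin n) k)) (S : Finset (Fin n →₀ ℕ))
    (b : (Fin n →₀ ℕ) → k) (p : (Fin n →₀ ℕ) → MvPolynomial (Fin n) k) :
    ∑ s ∈ S, b s • Ideal.Quotient.mk I (p s) = Ideal.Quotient.mk I (∑ s ∈ S, b s • p s) := by
  simp_rw [mk_smul']
  exact (map_sum (Ideal.Quotient.mkₐ k I) _ S).symm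

lemma mk_sum_smul (I : Ideal (MvPolynomial (Fin n) k)) {ι : Type*} [Fintype ι] (b : ι → k)
    (p : ι → MvPolynomial (Fin n) k) :
    ∑ t, b t • Ideal.Quotient.mk I (p t) = Ideal.Quotient.mk I (∑ t, b t • p t) := by
  simp_rw [mk_smul']
  exact (map_sum (Ideal.Quotient.mkₐ k I) _ _).symm

end Auxiliary

theorem exists_point_extending_quasiOrderIdeal (X : Finset (Fin n → k))
    (O : Finset (Fin n →₀ ℕ)) (hO : isQuasiOrderIdeal O)
    (hbasis : supportsBasis (MvPolynomial.vanishingIdeal k (X : Set (Fin n → k))) O)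
    (i : ℕ) (hi : 1 ≤ i ∧ i ≤ X.card - 1)
    (Y : Finset (Fin n → k)) (hYX : Y ⊆ X) (hYcard : Y.card = i)
    (Oi : Finset (Fin n →₀ ℕ)) (hOiO : Oi ⊆ O) (hOi : isQuasiOrderIdeal Oi)
    (hOicard : Oi.card = i)
    (hOibasis : supportsBasis (MvPolynomial.vanishingIdeal k (Y : Set (Fin n → k))) Oi)
    (m : Fin n →₀ ℕ) (hm : m ∈ borderF Oi) (hmO : m ∈ O) :
    ∃ P ∈ X \ Y,
      supportsBasis
        (MvPolynomial.vanishingIdeal k ((insert P Y : Finset (Fin n → k)) : Set (Fin n → k)))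
        (insert m Oi) := by
  classical
  obtain ⟨hOind, _⟩ := hbasis
  obtain ⟨hOiind, hOispan⟩ := hOibasis
  have hmnotOi : m ∉ Oi := (Finset.mem_sdiff.mp hm).2
  set mono : (Fin n →₀ ℕ) → MvPolynomial (Fin n) k := fun s => monomial s (1 : k) with hmono
  -- a representation of `m` in terms of `Oi` modulo `I(Y)`
  have hmem : Ideal.Quotient.mk (vanishingIdeal k (Y : Set (Fin n → k))) (mono m) ∈
      Submodule.span k (Set.range fun t : Oi =>
        Ideal.Quotient.mk (vanishingIdeal k (Y : Set (Fin n → k))) (monomial t.1 (1 : k))) := by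
    rw [hOispan]; exact Submodule.mem_top
  obtain ⟨c, hc⟩ := (Submodule.mem_span_range_iff_exists_fun k).mp hmem
  set cc : (Fin n →₀ ℕ) → k := fun s => if h : s ∈ Oi then c ⟨s, h⟩ else 0 with hcc
  have hccOi : ∀ t : Oi, cc t.1 = c t := by
    intro t; simp only [hcc]; rw [dif_pos t.2]
  set g : MvPolynomial (Fin n) k := mono m - ∑ s ∈ Oi, cc s • mono s with hg
  have hsumc : ∑ t : Oi, c t • mono t.1 = ∑ s ∈ Oi, cc s • mono s := by
    rw [← Finset.sum_coe_sort Oi fun s => cc s • mono s]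
    exact Finset.sum_congr rfl fun t _ => by rw [hccOi]
  have hgmkY : Ideal.Quotient.mk (vanishingIdeal k (Y : Set (Fin n → k))) g = 0 := by
    rw [hg, map_sub, ← hsumc, ← mk_sum_smul, hc, sub_self]
  have hgY : ∀ z ∈ Y, eval z g = 0 := by
    intro z hz
    exact mem_vanishingIdeal_iff.mp (Ideal.Quotient.eq_zero_iff_mem.mp hgmkY) z
      (Finset.mem_coe.mpr hz)
  by_cases hP : ∃ P ∈ X \ Y, eval P g ≠ 0
  · obtain ⟨P, hPXY, hPg⟩ := hP
    refine ⟨P, hPXY, ?_⟩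
    have hPY : P ∉ Y := (Finset.mem_sdiff.mp hPXY).2
    set I' := vanishingIdeal k ((insert P Y : Finset (Fin n → k)) : Set (Fin n → k)) with hI'
    have hind : LinearIndependent k
        (fun t : (insert m Oi : Finset (Fin n →₀ ℕ)) =>
          Ideal.Quotient.mk I' (monomial t.1 (1 : k))) := by
      rw [Fintype.linearIndependent_iff]
      intro b hb
      set bb : (Fin n →₀ ℕ) → k := fun s => if h : s ∈ insert m Oi then b ⟨s, h⟩ else 0 with hbb
      have hbbeq : ∀ t : (insert m Oi : Finset (Fin n →₀ ℕ)), bb t.1 = b t := by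
        intro t; simp only [hbb]; rw [dif_pos t.2]
      set q : MvPolynomial (Fin n) k := ∑ s ∈ Oi, bb s • mono s with hq
      have hbbm : bb m = b ⟨m, Finset.mem_insert_self m Oi⟩ := by
        simp [hbb]
      -- the polynomial corresponding to the linear relation vanishes on `insert P Y`
      have hzero : Ideal.Quotient.mk I' (bb m • mono m + q) = 0 := by
        rw [← hb]
        have : ∑ t : (insert m Oi : Finset (Fin n →₀ ℕ)),
            b t • Ideal.Quotient.mk I' (monomial t.1 (1 : k)) =
            Ideal.Quotient.mk I' (∑ s ∈ insert m Oi, bb s • mono s) := by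
          rw [← mk_fsum_smul,
            ← Finset.sum_coe_sort (insert m Oi)
              (fun s => bb s • Ideal.Quotient.mk I' (mono s))]
          exact (Finset.sum_congr rfl fun t _ => by rw [hbbeq]).symm
        rw [this, Finset.sum_insert hmnotOi]
      have hvanish : ∀ z ∈ insert P Y, eval z (bb m • mono m + q) = 0 := by
        intro z hz
        exact mem_vanishingIdeal_iff.mp (Ideal.Quotient.eq_zero_iff_mem.mp hzero) z
          (Finset.mem_coe.mpr hz)
      -- subtract `bb m • g` to get a relation on `Oi` over `Y`
      set r : MvPolynomial (Fin n) k := ∑ s ∈ Oi, (bb s + bb m * cc s) • mono s with hr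
      have hrdef : (bb m • mono m + q) - bb m • g = r := by
        rw [hr, hq, hg, smul_sub, Finset.smul_sum]
        simp_rw [add_smul, mul_smul]
        rw [Finset.sum_add_distrib]
        abel
      have hrY : ∀ z ∈ Y, eval z r = 0 := by
        intro z hz
        rw [← hrdef, map_sub, hvanish z (Finset.mem_insert_of_mem hz), smul_eval,
          hgY z hz, mul_zero, zero_sub, neg_zero]
      have hrmk : Ideal.Quotient.mk (vanishingIdeal k (Y : Set (Fin n → k))) r = 0 := by
        rw [Ideal.Quotient.eq_zero_iff_mem, mem_vanishingIdeal_iff]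
        intro z hz; exact hrY z (Finset.mem_coe.mp hz)
      have hcoef : ∀ t : Oi, bb t.1 + bb m * cc t.1 = 0 := by
        apply Fintype.linearIndependent_iff.mp hOiind (fun t : Oi => bb t.1 + bb m * cc t.1)
        rw [mk_sum_smul]
        rw [Finset.sum_coe_sort Oi (fun s => (bb s + bb m * cc s) • mono s)]
        exact hrmk
      -- conclude `bb m = 0`
      have hbm : bb m = 0 := by
        have hrzero : r = 0 := by
          rw [hr]
          refine Finset.sum_eq_zero fun s hs => ?_
          rw [show bb s + bb m * cc s = 0 from hcoef ⟨s, hs⟩, zero_smul]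
        have : bb m * eval P g = 0 := by
          have h1 : eval P (bb m • mono m + q) = 0 :=
            hvanish P (Finset.mem_insert_self P Y)
          have h2 : (bb m • mono m + q) = bb m • g := by
            have := hrdef
            rw [hrzero, sub_eq_zero] at this
            exact this
          rw [h2, smul_eval] at h1
          exact h1
        exact (mul_eq_zero.mp this).resolve_right hPg
      intro t
      rw [← hbbeq t]
      rcases Finset.mem_insert.mp t.2 with h | h
      · rw [h, hbm]
      · have := hcoef ⟨t.1, h⟩
        rw [hbm, zero_mul, add_zero] at this
        exact this
    refine ⟨hind, ?_⟩
    haveI : Nonempty (insert m Oi : Finset (Fin n →₀ ℕ)) :=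
      ⟨⟨m, Finset.mem_insert_self m Oi⟩⟩
    refine hind.span_eq_top_of_card_eq_finrank ?_
    rw [Fintype.card_coe, hI', finrank_quot, Finset.card_insert_of_notMem hmnotOi,
      Finset.card_insert_of_notMem hPY, hOicard, hYcard]
  · exfalso
    push_neg at hP
    have hgX : ∀ z ∈ X, eval z g = 0 := by
      intro z hz
      by_cases hzY : z ∈ Y
      · exact hgY z hzY
      · exact hP z (Finset.mem_sdiff.mpr ⟨hz, hzY⟩)
    set dd : (Fin n →₀ ℕ) → k :=
      fun s => if s = m then 1 else if s ∈ Oi then -cc s else 0 with hdd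
    have hOierase : Oi ⊆ O.erase m := fun s hs =>
      Finset.mem_erase.mpr ⟨fun h => hmnotOi (h ▸ hs), hOiO hs⟩
    have hpoly : ∑ s ∈ O, dd s • mono s = g := by
      rw [← Finset.add_sum_erase O (fun s => dd s • mono s) hmO]
      have h1 : dd m • mono m = mono m := by rw [hdd]; simp
      have h2 : ∑ s ∈ O.erase m, dd s • mono s = ∑ s ∈ Oi, dd s • mono s := by
        refine (Finset.sum_subset hOierase fun s hs hsOi => ?_).symm
        have hsm : s ≠ m := (Finset.mem_erase.mp hs).1
        rw [hdd]; simp [hsm, hsOi]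
      have h3 : ∑ s ∈ Oi, dd s • mono s = -∑ s ∈ Oi, cc s • mono s := by
        rw [← Finset.sum_neg_distrib]
        refine Finset.sum_congr rfl fun s hs => ?_
        have hsm : s ≠ m := fun h => hmnotOi (h ▸ hs)
        rw [hdd]; simp [hsm, hs, neg_smul]
      rw [h1, h2, h3, hg, sub_eq_add_neg]
    have hmkX : Ideal.Quotient.mk (vanishingIdeal k (X : Set (Fin n → k))) g = 0 := by
      rw [Ideal.Quotient.eq_zero_iff_mem, mem_vanishingIdeal_iff]
      intro z hz; exact hgX z (Finset.mem_coe.mp hz)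
    have hrel : ∑ t : O, dd t.1 •
        Ideal.Quotient.mk (vanishingIdeal k (X : Set (Fin n → k))) (monomial t.1 (1 : k)) = 0 := by
      rw [mk_sum_smul]
      rw [Finset.sum_coe_sort O (fun s => dd s • mono s), hpoly]
      exact hmkX
    have := Fintype.linearIndependent_iff.mp hOind (fun t : O => dd t.1) hrel ⟨m, hmO⟩
    rw [hdd] at this
    simp at this
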